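/- Under the hypotheses of the cosine-iterate bounds (T, B, C₀ strongly continuous, ‖T(t)‖ ≤ M e^(ωt) t^(α−1)/Γ(α), ‖C₀(t)‖ ≤ M e^(ωt), C_{n+1}(t)x = ∫₀ᵗ T(t−s)B(s)C_n(s)x ds, 1 < α ≤ 2, M ≥ 1, ω ≥ 0), for every t ≥ 0 and x ∈ X the tail series Σ_{n=1}^∞ C_n(t)x converges absolutely and ‖Σ_{n=1}^∞ C_n(t)x‖ ≤ M · e^(ωt) · [E_α(M·K_t·t^α) − 1] · ‖x‖, where K_t = sup_{0≤s≤t} ‖B(s)‖. Equivalently, ‖C_α(t; A+B) − C_α(t; A)‖ ≤ M e^(ωt)[E_α(M K_t t^α) − 1]. -/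

import Mathlib

open MeasureTheory Set

lemma real_beta {a b : ℝ} (ha : 0 < a) (hb : 0 < b) :
    ∫ u in (0:ℝ)..1, u ^ (b - 1) * (1 - u) ^ (a - 1) =
      Real.Gamma a * Real.Gamma b / Real.Gamma (a + b) := by
  have h := Complex.Gamma_mul_Gamma_eq_betaIntegral (s := (b:ℂ)) (t := (a:ℂ))
    (by simpa using hb) (by simpa using ha)
  have hbeta : Complex.betaIntegral (b:ℂ) (a:ℂ) =
      ((∫ u in (0:ℝ)..1, u ^ (b - 1) * (1 - u) ^ (a - 1) : ℝ) : ℂ) := by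
    rw [Complex.betaIntegral, ← intervalIntegral.integral_ofReal]
    apply intervalIntegral.integral_congr
    intro u hu
    rw [Set.uIcc_of_le (by norm_num : (0:ℝ) ≤ 1)] at hu
    push_cast
    rw [Complex.ofReal_cpow hu.1, Complex.ofReal_cpow (by linarith [hu.2])]
    push_cast
    ring
  rw [hbeta, Complex.Gamma_ofReal, Complex.Gamma_ofReal,
    (by push_cast; ring : (b:ℂ) + (a:ℂ) = ((a+b : ℝ) : ℂ)), Complex.Gamma_ofReal] at h
  have h2 : Real.Gamma b * Real.Gamma a
      = Real.Gamma (a+b) * ∫ u in (0:ℝ)..1, u ^ (b - 1) * (1 - u) ^ (a - 1) := by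
    exact_mod_cast h
  have hg : Real.Gamma (a+b) ≠ 0 := (Real.Gamma_pos_of_pos (by linarith)).ne'
  field_simp
  linarith [h2]

lemma scaled_beta {a b t : ℝ} (ha : 0 < a) (hb : 0 < b) (hab : 1 < a + b) (ht : 0 ≤ t) :
    ∫ s in (0:ℝ)..t, (t - s) ^ (a - 1) * s ^ (b - 1) =
      Real.Gamma a * Real.Gamma b / Real.Gamma (a + b) * t ^ (a + b - 1) := by
  rcases eq_or_lt_of_le ht with rfl | ht'
  · simp [Real.zero_rpow (by linarith : a + b - 1 ≠ 0)]
  · have h1 : t • ∫ u in (0:ℝ)..1, (t - t * u) ^ (a - 1) * (t * u) ^ (b - 1)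
        = ∫ s in (0:ℝ)..t, (t - s) ^ (a - 1) * s ^ (b - 1) := by
      simpa using intervalIntegral.smul_integral_comp_mul_left
        (fun s => (t - s) ^ (a - 1) * s ^ (b - 1)) t (a := 0) (b := 1)
    have h2 : ∫ u in (0:ℝ)..1, (t - t * u) ^ (a - 1) * (t * u) ^ (b - 1)
        = t ^ (a - 1) * t ^ (b - 1) *
          ∫ u in (0:ℝ)..1, u ^ (b - 1) * (1 - u) ^ (a - 1) := by
      rw [← intervalIntegral.integral_const_mul]
      apply intervalIntegral.integral_congr
      intro u hu
      rw [Set.uIcc_of_le (by norm_num : (0:ℝ) ≤ 1)] at hu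
      dsimp only
      have h1u : (0:ℝ) ≤ 1 - u := by linarith [hu.2]
      rw [show t - t * u = t * (1 - u) by ring, Real.mul_rpow ht h1u,
        Real.mul_rpow ht hu.1]
      ring
    rw [← h1, h2, real_beta ha hb, smul_eq_mul]
    rw [show t * (t ^ (a-1) * t ^ (b-1) * (Real.Gamma a * Real.Gamma b / Real.Gamma (a + b)))
        = Real.Gamma a * Real.Gamma b / Real.Gamma (a + b) * (t * (t ^ (a-1) * t ^ (b-1)))
        by ring]
    congr 1
    rw [show t * (t ^ (a-1) * t ^ (b-1)) = t ^ (1:ℝ) * (t ^ (a-1) * t ^ (b-1))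
      by rw [Real.rpow_one], ← Real.rpow_add ht', ← Real.rpow_add ht']
    congr 1
    ring

lemma gamma_ge_factorial {α : ℝ} (hα : 1 ≤ α) (k : ℕ) :
    (Nat.factorial k : ℝ) ≤ Real.Gamma ((k : ℝ) * α + 1) := by
  rcases Nat.eq_zero_or_pos k with rfl | hk
  · simp [Real.Gamma_one]
  · have hk1 : (1:ℝ) ≤ (k:ℝ) := by exact_mod_cast hk
    have h1 : ((k:ℝ) + 1) ≤ (k:ℝ) * α + 1 := by nlinarith
    have h2 : (2:ℝ) ≤ (k:ℝ) + 1 := by linarith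
    calc (Nat.factorial k : ℝ) = Real.Gamma ((k:ℝ) + 1) := by rw [Real.Gamma_nat_eq_factorial]
      _ ≤ Real.Gamma ((k:ℝ) * α + 1) :=
        Real.Gamma_strictMonoOn_Ici.monotoneOn h2 (le_trans h2 h1) h1

lemma summable_ml {α : ℝ} (hα : 1 ≤ α) {c : ℝ} (hc : 0 ≤ c) :
    Summable (fun k : ℕ => c ^ k / Real.Gamma ((k : ℝ) * α + 1)) := by
  apply Summable.of_nonneg_of_le (fun k => by positivity)
    (fun k => ?_) (Real.summable_pow_div_factorial c)
  have hg : (0:ℝ) < (Nat.factorial k : ℝ) := by positivity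
  exact div_le_div_of_nonneg_left (by positivity) hg (gamma_ge_factorial hα k)

/-- The tail series `Σ_{n≥1} C_n(t)x` converges absolutely and
`‖C_α(t;A+B)x − C_α(t;A)x‖ ≤ M e^{ωt}[E_α(M K_t t^α) − 1] ‖x‖`. -/
theorem perturbed_cosine_difference_bound {X : Type*} [NormedAddCommGroup X]
    [NormedSpace ℝ X] [CompleteSpace X]
    (α M ω : ℝ) (hα1 : 1 < α) (hα2 : α ≤ 2) (hM : 1 ≤ M) (hω : 0 ≤ ω)
    (T B : ℝ → X →L[ℝ] X) (C : ℕ → ℝ → X →L[ℝ] X)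
    (hTcont : ∀ x : X, ContinuousOn (fun t => T t x) (Set.Ici 0))
    (hBcont : ∀ x : X, ContinuousOn (fun t => B t x) (Set.Ici 0))
    (hC0cont : ∀ x : X, ContinuousOn (fun t => C 0 t x) (Set.Ici 0))
    (hTbd : ∀ t : ℝ, 0 ≤ t → ‖T t‖ ≤ M * Real.exp (ω * t) * t ^ (α - 1) / Real.Gamma α)
    (hC0bd : ∀ t : ℝ, 0 ≤ t → ‖C 0 t‖ ≤ M * Real.exp (ω * t))
    (hrec : ∀ (n : ℕ) (t : ℝ) (x : X),
      C (n + 1) t x = ∫ s in (0:ℝ)..t, T (t - s) (B s (C n s x)))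
    (t : ℝ) (ht : 0 ≤ t) (x : X) :
    Summable (fun n : ℕ => ‖C (n + 1) t x‖) ∧
    ‖∑' n : ℕ, C (n + 1) t x‖ ≤ M * Real.exp (ω * t) *
      ((∑' k : ℕ, (M * (sSup ((fun s => ‖B s‖) '' Set.Icc 0 t)) * t ^ α) ^ k /
        Real.Gamma ((k : ℝ) * α + 1)) - 1) * ‖x‖ := by
  have hα0 : (0:ℝ) < α := by linarith
  have hΓα : 0 < Real.Gamma α := Real.Gamma_pos_of_pos hα0
  have hM0 : (0:ℝ) < M := by linarith
  set K := sSup ((fun s => ‖B s‖) '' Set.Icc 0 t) with hKdef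
  have hBdd : BddAbove ((fun s => ‖B s‖) '' Set.Icc 0 t) := by
    have hptB : ∀ y : X, ∃ C'', ∀ s : Set.Icc (0:ℝ) t,
        ‖(fun s : Set.Icc (0:ℝ) t => B s.1) s y‖ ≤ C'' := by
      intro y
      obtain ⟨Cy, hCy⟩ := (isCompact_Icc (a := (0:ℝ)) (b := t)).exists_bound_of_continuousOn
        ((hBcont y).mono (fun s hs => hs.1))
      exact ⟨Cy, fun s => hCy s s.2⟩
    obtain ⟨C', hC'⟩ := banach_steinhaus hptB
    exact ⟨C', by rintro _ ⟨s, hs, rfl⟩; exact hC' ⟨s, hs⟩⟩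
  have hKB : ∀ s : ℝ, 0 ≤ s → s ≤ t → ‖B s‖ ≤ K := fun s h1 h2 =>
    le_csSup hBdd ⟨s, ⟨h1, h2⟩, rfl⟩
  have hK0 : 0 ≤ K := le_trans (norm_nonneg _) (hKB 0 le_rfl ht)
  -- key induction bound
  have key : ∀ n : ℕ, ∀ s : ℝ, 0 ≤ s → s ≤ t →
      ‖C n s x‖ ≤ M * Real.exp (ω * s) *
        ((M * K) ^ n * s ^ ((n:ℝ) * α) / Real.Gamma ((n:ℝ) * α + 1)) * ‖x‖ := by
    intro n
    induction n with
    | zero =>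
      intro s hs0 _
      simp only [Nat.cast_zero, zero_mul, Real.rpow_zero, pow_zero, zero_add,
        Real.Gamma_one, one_mul, mul_one, div_one]
      calc ‖C 0 s x‖ ≤ ‖C 0 s‖ * ‖x‖ := (C 0 s).le_opNorm x
        _ ≤ M * Real.exp (ω * s) * ‖x‖ :=
            mul_le_mul_of_nonneg_right (hC0bd s hs0) (norm_nonneg x)
    | succ n ih =>
      intro s hs0 hst
      have hΓn : 0 < Real.Gamma ((n:ℝ) * α + 1) := Real.Gamma_pos_of_pos (by positivity)
      set c : ℝ := M * Real.exp (ω * s) * K * M * (M*K)^n /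
        (Real.Gamma α * Real.Gamma ((n:ℝ)*α+1)) * ‖x‖ with hc
      have hc0 : 0 ≤ c := by positivity
      set g : ℝ → ℝ := fun r => c * ((s - r) ^ (α - 1) * r ^ ((n:ℝ) * α)) with hgdef
      have hgcont : Continuous g := by
        apply continuous_const.mul
        exact ((continuous_const.sub continuous_id).rpow_const
            (fun _ => Or.inr (by linarith))).mul
          (Real.continuous_rpow_const (by positivity))
      have hgint : IntervalIntegrable g MeasureTheory.volume 0 s :=
        hgcont.intervalIntegrable 0 s
      -- pointwise bound
      have hpt : ∀ r ∈ Set.uIoc (0:ℝ) s, ‖T (s - r) (B r (C n r x))‖ ≤ g r := by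
        intro r hr
        rw [Set.uIoc_of_le hs0] at hr
        have hr0 : 0 ≤ r := hr.1.le
        have hrs : r ≤ s := hr.2
        have hsr : 0 ≤ s - r := by linarith
        have hT := hTbd (s - r) hsr
        have hB := hKB r hr0 (hrs.trans hst)
        have hC := ih r hr0 (hrs.trans hst)
        have step1 : ‖T (s - r) (B r (C n r x))‖ ≤ ‖T (s - r)‖ * (‖B r‖ * ‖C n r x‖) :=
          le_trans ((T (s - r)).le_opNorm _)
            (mul_le_mul_of_nonneg_left ((B r).le_opNorm _) (norm_nonneg _))
        have step2 : ‖T (s - r)‖ * (‖B r‖ * ‖C n r x‖) ≤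
            (M * Real.exp (ω * (s - r)) * (s - r) ^ (α - 1) / Real.Gamma α) *
            (K * (M * Real.exp (ω * r) *
              ((M*K)^n * r ^ ((n:ℝ)*α) / Real.Gamma ((n:ℝ)*α+1)) * ‖x‖)) := by
          apply mul_le_mul hT _ (mul_nonneg (norm_nonneg _) (norm_nonneg _)) (by positivity)
          exact mul_le_mul hB hC (norm_nonneg _) hK0
        refine le_trans (le_trans step1 step2) (le_of_eq ?_)
        rw [hgdef, hc]
        rw [show ω * (s - r) = ω * s - ω * r by ring, Real.exp_sub]
        have he : Real.exp (ω * r) ≠ 0 := (Real.exp_pos _).ne'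
        field_simp
      have hnorm := intervalIntegral.norm_integral_le_abs_of_norm_le
        (f := fun r => T (s - r) (B r (C n r x))) (μ := MeasureTheory.volume)
        (a := 0) (b := s)
        ((MeasureTheory.ae_restrict_iff' measurableSet_uIoc).2
          (MeasureTheory.ae_of_all _ hpt)) hgint
      -- compute the integral of g
      have hbint : ∫ r in (0:ℝ)..s, (s - r) ^ (α - 1) * r ^ ((n:ℝ)*α)
          = Real.Gamma α * Real.Gamma ((n:ℝ)*α+1) / Real.Gamma (((n:ℝ)+1) * α + 1) *
            s ^ (((n:ℝ)+1) * α) := by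
        have h := scaled_beta (a := α) (b := (n:ℝ)*α+1) (t := s) hα0 (by positivity)
          (by nlinarith [mul_nonneg (Nat.cast_nonneg (α := ℝ) n) hα0.le]) hs0
        rw [show α + ((n:ℝ)*α+1) = ((n:ℝ)+1)*α+1 by ring] at h
        rw [show ((n:ℝ)+1)*α+1-1 = ((n:ℝ)+1)*α by ring] at h
        rw [show (n:ℝ)*α+1-1 = (n:ℝ)*α by ring] at h
        exact h
      have hval : ∫ r in (0:ℝ)..s, g r
          = c * (Real.Gamma α * Real.Gamma ((n:ℝ)*α+1) / Real.Gamma (((n:ℝ)+1) * α + 1) *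
            s ^ (((n:ℝ)+1) * α)) := by
        rw [hgdef, intervalIntegral.integral_const_mul, hbint]
      have hΓn1 : 0 < Real.Gamma (((n:ℝ)+1) * α + 1) :=
        Real.Gamma_pos_of_pos (by positivity)
      have habs : |∫ r in (0:ℝ)..s, g r| = ∫ r in (0:ℝ)..s, g r := by
        rw [abs_of_nonneg]
        rw [hval]
        positivity
      rw [hrec n s x]
      calc ‖∫ r in (0:ℝ)..s, T (s - r) (B r (C n r x))‖
          ≤ |∫ r in (0:ℝ)..s, g r| := hnorm
        _ = ∫ r in (0:ℝ)..s, g r := habs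
        _ = M * Real.exp (ω * s) *
            ((M * K) ^ (n+1) * s ^ (((n+1:ℕ) : ℝ) * α) /
              Real.Gamma (((n+1:ℕ) : ℝ) * α + 1)) * ‖x‖ := by
            rw [hval, hc, show ((n+1:ℕ) : ℝ) = (n:ℝ)+1 by push_cast; ring, pow_succ]
            field_simp
  -- assemble
  set c₀ : ℝ := M * K * t ^ α with hc₀
  have hc₀0 : 0 ≤ c₀ := by positivity
  set f : ℕ → ℝ := fun k => c₀ ^ k / Real.Gamma ((k : ℝ) * α + 1) with hf
  have hsumf : Summable f := summable_ml hα1.le hc₀0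
  have hsumf1 : Summable (fun n : ℕ => f (n+1)) := by
    exact (summable_nat_add_iff 1).2 hsumf
  have hbound : ∀ n : ℕ, ‖C (n + 1) t x‖ ≤ (M * Real.exp (ω * t) * ‖x‖) * f (n+1) := by
    intro n
    have h := key (n+1) t ht le_rfl
    push_cast at h
    have hpow : (M*K)^(n+1) * t ^ (((n:ℝ)+1) * α) = c₀ ^ (n+1) := by
      rw [hc₀, show ((n:ℝ)+1) * α = α * ((n:ℝ)+1) by ring, Real.rpow_mul ht,
        show ((n:ℝ)+1) = ((n+1 : ℕ) : ℝ) by push_cast; ring, Real.rpow_natCast]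
      rw [mul_pow, mul_pow]
      ring
    have hfval : f (n+1) = c₀ ^ (n+1) / Real.Gamma (((n:ℝ)+1)*α+1) := by
      have hcast : ((n+1 : ℕ) : ℝ) = (n:ℝ)+1 := by push_cast; ring
      simp only [hf, hcast]
    refine h.trans (le_of_eq ?_)
    rw [hfval, ← hpow]
    ring
  have hsummable : Summable (fun n : ℕ => ‖C (n + 1) t x‖) :=
    Summable.of_nonneg_of_le (fun n => norm_nonneg _) hbound
      (hsumf1.mul_left (M * Real.exp (ω * t) * ‖x‖))
  refine ⟨hsummable, ?_⟩
  have hf0 : f 0 = 1 := by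
    simp [hf, Real.Gamma_one]
  have hshift : ∑' n : ℕ, f (n+1) = (∑' k : ℕ, f k) - 1 := by
    have := Summable.tsum_eq_zero_add hsumf
    rw [hf0] at this
    linarith [this]
  calc ‖∑' n : ℕ, C (n + 1) t x‖ ≤ ∑' n : ℕ, ‖C (n + 1) t x‖ :=
        norm_tsum_le_tsum_norm hsummable
    _ ≤ ∑' n : ℕ, (M * Real.exp (ω * t) * ‖x‖) * f (n+1) :=
        Summable.tsum_le_tsum hbound hsummable (hsumf1.mul_left _)
    _ = (M * Real.exp (ω * t) * ‖x‖) * ∑' n : ℕ, f (n+1) := tsum_mul_left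
    _ = M * Real.exp (ω * t) * ((∑' k : ℕ, f k) - 1) * ‖x‖ := by rw [hshift]; ring
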